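/- arXiv:1604.04417 — 8 statements merged into one kernel-verified Lean document; each statement's English description precedes it below -/
import Mathlib

section
/- Let δ be a triple derivation on a C*-algebra A and let e be a partial isometry in A. Then P₀(e)(δ(e)) = 0 and P₂(e)(δ(e)) = −Q(e)(δ(e)). -/
variable {A : Type*} [NonUnitalNormedRing A] [StarRing A] [CStarRing A]
  [NormedSpace ℂ A] [IsScalarTower ℂ A A] [SMulCommClass ℂ A A]
  [StarModule ℂ A] [CompleteSpace A]

/-- The triple product `{a,b,c} = (1/2)(a b* c + c b* a)` on a C*-algebra. -/
noncomputable def tp (a b c : A) : A :=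
  (2⁻¹ : ℂ) • (a * star b * c + c * star b * a)

/-- A triple derivation: a (complex) linear map satisfying the triple Leibniz rule. -/
def IsTripleDerivation (δ : A → A) : Prop :=
  IsLinearMap ℂ δ ∧
    ∀ a b c : A, δ (tp a b c) = tp (δ a) b c + tp a (δ b) c + tp a b (δ c)

/-- A weak-local triple derivation: a linear map `T` such that for every continuous
linear functional `φ` and every `a` there is a triple derivation `δ` with `φ (T a) = φ (δ a)`. -/
def IsWeakLocalTripleDerivation (T : A → A) : Prop :=
  IsLinearMap ℂ T ∧
    ∀ (φ : A →L[ℂ] ℂ) (a : A),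
      ∃ δ : A → A, IsTripleDerivation δ ∧ φ (T a) = φ (δ a)

/-- For a triple derivation `δ` and a partial isometry `e`:
`P₀(e)(δ e) = 0` and `P₂(e)(δ e) = -Q(e)(δ e)`. -/
theorem stmt2 (δ : A → A) (hδ : IsTripleDerivation δ) (e : A)
    (he : e * star e * e = e) :
    δ e - e * star e * δ e - δ e * star e * e + e * star e * δ e * star e * e = 0 ∧
    e * star e * δ e * star e * e = -(e * star (δ e) * e) := by
  obtain ⟨-, hrule⟩ := hδ
  have hstar : star e * e * star e = star e := by
    have := congrArg star he
    simpa [star_mul, mul_assoc] using this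
  have he1 : e * (star e * e) = e := by rw [← mul_assoc, he]
  have he2 : ∀ x : A, e * (star e * (e * x)) = e * x := by
    intro x; rw [← mul_assoc, ← mul_assoc, he]
  have hs2 : ∀ x : A, star e * (e * (star e * x)) = star e * x := by
    intro x; rw [← mul_assoc, ← mul_assoc, hstar]
  have hte : tp e e e = e := by
    rw [tp, he, ← two_smul ℂ e, smul_smul]
    norm_num
  have E0 := hrule e e e
  rw [hte] at E0
  simp only [tp] at E0
  have E : δ e = δ e * star e * e + e * star e * δ e + e * star (δ e) * e := by
    refine E0.trans ?_; module
  have H : e * star e * δ e * star e * e =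
      e * star e * δ e * star e * e + e * star e * δ e * star e * e
        + e * star (δ e) * e := by
    conv_lhs => rw [E]
    simp only [mul_add, add_mul, mul_assoc, he1, he2, hs2]
  have key : e * star e * δ e * star e * e = -(e * star (δ e) * e) := by
    apply eq_neg_of_add_eq_zero_left
    have h := H
    rw [add_assoc] at h
    exact (left_eq_add.mp h)
  refine ⟨?_, key⟩
  rw [key]
  nth_rewrite 1 [E]
  abel
end

section
/- Let T be a weak-local triple derivation on a C*-algebra A and let e be a partial isometry in A. Then P₀(e)(T(e)) = 0, i.e., T(e) − e e* T(e) − T(e) e* e + e e* T(e) e* e = 0. -/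
variable {A : Type*} [NonUnitalNormedRing A] [StarRing A] [CStarRing A]
  [NormedSpace ℂ A] [IsScalarTower ℂ A A] [SMulCommClass ℂ A A]
  [StarModule ℂ A] [CompleteSpace A]

lemma half_double (y : A) : (2⁻¹ : ℂ) • (y + y) = y := by
  rw [← two_smul ℂ y, smul_smul]
  norm_num

lemma tp_idem (e : A) (he : e * star e * e = e) : tp e e e = e := by
  unfold tp; rw [he]; exact half_double e

-- from the Leibniz rule: δ e = e e* x + x e* e + e x* e, x = δ e
lemma tderiv_eq (δ : A → A) (hδ : IsTripleDerivation δ) (e : A) (he : e * star e * e = e) :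
    δ e = e * star e * δ e + δ e * (star e * e) + e * star (δ e) * e := by
  have h := hδ.2 e e e
  rw [tp_idem e he] at h
  unfold tp at h
  refine h.trans ?_
  simp only [← mul_assoc]
  module

lemma key (e x : A) (he : e * star e * e = e)
    (hx : x = e * star e * x + x * (star e * e) + e * star x * e) :
    x - e * star e * x - x * star e * e + e * star e * x * star e * e = 0 := by
  have hee : e * star e * (e * star e) = e * star e := by
    rw [show e * star e * (e * star e) = (e * star e * e) * star e by noncomm_ring, he]
  have hse : star e * e * (star e * e) = star e * e := by
    rw [show star e * e * (star e * e) = star e * (e * star e * e) by noncomm_ring, he]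
  -- cross term
  have hc : e * star e * x * (star e * e) = - (e * star x * e) := by
    have h2 := congrArg (fun y => e * star e * y * (star e * e)) hx
    have e1 : e * star e * (e * star e * x) * (star e * e) = e * star e * x * (star e * e) := by
      rw [show e * star e * (e * star e * x) = (e * star e * (e * star e)) * x by noncomm_ring, hee]
    have e2 : e * star e * (x * (star e * e)) * (star e * e) = e * star e * x * (star e * e) := by
      rw [show e * star e * (x * (star e * e)) * (star e * e)
        = e * star e * x * (star e * e * (star e * e)) by noncomm_ring, hse]
    have e3 : e * star e * (e * star x * e) * (star e * e) = e * star x * e := by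
      rw [show e * star e * (e * star x * e) * (star e * e)
        = (e * star e * e) * star x * (e * star e * e) by noncomm_ring, he]
    rw [mul_add, mul_add, add_mul, add_mul, e1] at h2
    -- h2 : e e* x e*e = e e* x e*e + e e* x e*e + e x* e  (after e2,e3)
    rw [e2, e3, add_assoc] at h2
    have h3 := left_eq_add.mp h2
    exact eq_neg_of_add_eq_zero_left h3
  rw [show e * star e * x * star e * e = e * star e * x * (star e * e) by rw [mul_assoc], hc]
  nth_rewrite 1 [hx]
  noncomm_ring

/-- For a weak-local triple derivation `T` and a partial isometry `e`,
`P₀(e)(T e) = 0`. -/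
theorem stmt5 (T : A → A) (hT : IsWeakLocalTripleDerivation T)
    (e : A) (he : e * star e * e = e) :
    T e - e * star e * T e - T e * star e * e + e * star e * T e * star e * e = 0 := by
  let L : A →L[ℂ] A := ContinuousLinearMap.mul ℂ A (e * star e)
  let R : A →L[ℂ] A := (ContinuousLinearMap.mul ℂ A).flip (star e * e)
  let P : A →L[ℂ] A := ContinuousLinearMap.id ℂ A - L - R + L.comp R
  have hP : ∀ y : A, P y = y - e * star e * y - y * star e * e
      + e * star e * y * star e * e := by
    intro y
    simp only [P, L, R, ContinuousLinearMap.add_apply, ContinuousLinearMap.sub_apply,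
      ContinuousLinearMap.comp_apply, ContinuousLinearMap.id_apply,
      ContinuousLinearMap.mul_apply', ContinuousLinearMap.flip_apply]
    noncomm_ring
  have hPd : ∀ δ : A → A, IsTripleDerivation δ → P (δ e) = 0 := by
    intro δ hδ
    rw [hP]
    exact key e (δ e) he (tderiv_eq δ hδ e he)
  have hz : P (T e) = 0 := by
    apply NormedSpace.eq_zero_of_forall_dual_eq_zero ℂ
    intro g
    obtain ⟨δ, hδ, hφ⟩ := hT.2 (g.comp P) e
    simp only [ContinuousLinearMap.comp_apply] at hφ
    rw [hφ, hPd δ hδ, map_zero]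
  rw [← hP (T e)]
  exact hz
end

section
/- Let T be a weak-local triple derivation on a C*-algebra A and let e be a partial isometry in A. Then P₂(e)(T(e)) = −Q(e)(T(e)), i.e., e e* T(e) e* e = −e T(e)* e. -/
variable {A : Type*} [NonUnitalNormedRing A] [StarRing A] [CStarRing A]
  [NormedSpace ℂ A] [IsScalarTower ℂ A A] [SMulCommClass ℂ A A]
  [StarModule ℂ A] [CompleteSpace A]

-- aux: algebraic step
lemma aux_alg (e d : A) (he : e * star e * e = e)
    (key : d = d * star e * e + e * star e * d + e * star d * e) :
    e * star e * d * star e * e = -(e * star d * e) := by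
  have he2 : e * (star e * e) = e := by rw [← mul_assoc, he]
  have he3 : ∀ x : A, e * (star e * (e * x)) = e * x := by
    intro x; rw [← mul_assoc, ← mul_assoc, he]
  have h := congrArg (fun x => e * star e * x * star e * e) key
  simp only [mul_add, add_mul, mul_assoc] at h
  simp only [he2, he3] at h
  rw [add_assoc] at h
  have h0 := (left_eq_add).mp h
  simp only [mul_assoc]
  exact eq_neg_of_add_eq_zero_left h0

-- key identity for triple derivations
lemma td_key (δ : A → A) (hδ : IsTripleDerivation δ) (e : A)
    (he : e * star e * e = e) :
    δ e = δ e * star e * e + e * star e * δ e + e * star (δ e) * e := by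
  have hte : tp e e e = e := by
    unfold tp; rw [he, ← two_smul ℂ, smul_smul]; norm_num
  have h := hδ.2 e e e
  rw [hte] at h
  conv_lhs => rw [h]
  unfold tp
  module


/-- For a weak-local triple derivation `T` and a partial isometry `e`,
`P₂(e)(T e) = -Q(e)(T e)`. -/
theorem stmt6 (T : A → A) (hT : IsWeakLocalTripleDerivation T)
    (e : A) (he : e * star e * e = e) :
    e * star e * T e * star e * e = -(e * star (T e) * e) := by
  have hz : ∀ φ : A →L[ℂ] ℂ,
      (φ (e * star e * T e * star e * e + e * star (T e) * e)).re = 0 := by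
    intro φ
    -- build the auxiliary continuous linear functional ψ
    have hcont : Continuous fun x : A =>
        φ (e * star e * x * star e * e) + (starRingEnd ℂ) (φ (e * star x * e)) := by
      have c1 : Continuous fun x : A => φ (e * star e * x * star e * e) :=
        φ.continuous.comp (((continuous_const.mul continuous_id).mul continuous_const).mul continuous_const)
      have c2 : Continuous fun x : A => (starRingEnd ℂ) (φ (e * star x * e)) :=
        Complex.continuous_conj.comp
          (φ.continuous.comp ((continuous_const.mul continuous_star).mul continuous_const))
      exact c1.add c2
    let ψ : A →L[ℂ] ℂ :=
      ContinuousLinearMap.mk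
        { toFun := fun x =>
            φ (e * star e * x * star e * e) + (starRingEnd ℂ) (φ (e * star x * e)),
          map_add' := by
            intro x y
            simp only [mul_add, add_mul, star_add, map_add]
            ring
          map_smul' := by
            intro c x
            simp only [star_smul, mul_smul_comm, smul_mul_assoc, map_smul, smul_eq_mul,
              RingHom.id_apply, map_mul, starRingEnd_apply, star_star]
            ring } hcont
    obtain ⟨δ, hδ, hφψ⟩ := hT.2 ψ e
    have hkey := td_key δ hδ e he
    have halg := aux_alg e (δ e) he hkey
    have hψδ : (ψ (δ e)).re = 0 := by
      show (φ (e * star e * δ e * star e * e) + (starRingEnd ℂ) (φ (e * star (δ e) * e))).re = 0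
      rw [halg, map_neg]
      simp [Complex.add_re]
    have hψT : (ψ (T e)).re = 0 := by rw [hφψ]; exact hψδ
    have : (φ (e * star e * T e * star e * e)).re + (φ (e * star (T e) * e)).re = 0 := by
      have := hψT
      simpa [ψ, Complex.add_re, Complex.conj_re] using this
    simpa [map_add, Complex.add_re] using this
  have hz0 : e * star e * T e * star e * e + e * star (T e) * e = 0 := by
    apply NormedSpace.eq_zero_of_forall_dual_eq_zero ℂ
    intro φ
    have h1 := hz φ
    have h2 := hz (Complex.I • φ)
    simp only [ContinuousLinearMap.smul_apply, smul_eq_mul, Complex.mul_re, Complex.I_re,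
      Complex.I_im, zero_mul, one_mul, zero_sub, neg_eq_zero] at h2
    exact Complex.ext h1 h2
  exact eq_neg_of_add_eq_zero_left hz0
end

section
/- Let T be a weak-local triple derivation on a C*-algebra A and let e be a partial isometry in A. Then T(e) = 2{T(e),e,e} + {e,T(e),e}, i.e., T(e) = T(e) e* e + e e* T(e) + e T(e)* e. -/
variable {A : Type*} [NonUnitalNormedRing A] [StarRing A] [CStarRing A]
  [NormedSpace ℂ A] [IsScalarTower ℂ A A] [SMulCommClass ℂ A A]
  [StarModule ℂ A] [CompleteSpace A]

set_option linter.unusedSectionVars false in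
/-- Any triple derivation satisfies `δ e = δe e* e + e e* δe + e (δe)* e` at a tripotent `e`. -/
lemma tripleDeriv_tripotent {δ : A → A} (hδ : IsTripleDerivation δ)
    {e : A} (he : e * star e * e = e) :
    δ e = δ e * star e * e + e * star e * δ e + e * star (δ e) * e := by
  have h := hδ.2 e e e
  have h0 : tp e e e = e := by
    rw [tp, he, ← two_smul ℂ, smul_smul]
    norm_num
  rw [h0] at h
  conv_lhs => rw [h]
  simp only [tp]
  module

/-- For a weak-local triple derivation `T` and a partial isometry `e`,
`T e = 2{T e, e, e} + {e, T e, e}`, i.e. `T e = T e e* e + e e* T e + e (T e)* e`. -/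
theorem stmt7 (T : A → A) (hT : IsWeakLocalTripleDerivation T)
    (e : A) (he : e * star e * e = e) :
    T e = T e * star e * e + e * star e * T e + e * star (T e) * e := by
  set y : A := T e - (T e * star e * e + e * star e * T e + e * star (T e) * e) with hy
  have key : ∀ φ : A →L[ℂ] ℂ, (φ y).re = 0 := by
    intro φ
    -- the conjugate-linear term, made linear by post-composing with conjugation
    have hc0 : Continuous fun x : A => e * star x * e := by fun_prop
    have χcont : Continuous fun x : A => (starRingEnd ℂ) (φ (e * star x * e)) :=
      Complex.continuous_conj.comp (φ.continuous.comp hc0)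
    let χ : A →L[ℂ] ℂ :=
      { toFun := fun x => (starRingEnd ℂ) (φ (e * star x * e))
        map_add' := by intro x y; simp [star_add, mul_add, add_mul, map_add]
        map_smul' := by
          intro c x
          simp only [star_smul, mul_smul_comm, smul_mul_assoc, map_smul, smul_eq_mul,
            map_mul, RCLike.star_def, Complex.conj_conj, RingHom.id_apply]
        cont := χcont }
    let mR : A →L[ℂ] A := (ContinuousLinearMap.mul ℂ A).flip (star e * e)
    let mL : A →L[ℂ] A := ContinuousLinearMap.mul ℂ A (e * star e)
    let ψ : A →L[ℂ] ℂ := φ - φ.comp mR - φ.comp mL - χ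
    obtain ⟨δ, hδ, hφδ⟩ := hT.2 ψ e
    have hψ : ∀ x : A, ψ x = φ x - φ (x * star e * e) - φ (e * star e * x)
        - (starRingEnd ℂ) (φ (e * star x * e)) := by
      intro x
      simp only [ψ, mR, mL, χ, ContinuousLinearMap.sub_apply, ContinuousLinearMap.comp_apply,
        ContinuousLinearMap.flip_apply, ContinuousLinearMap.mul_apply', ContinuousLinearMap.coe_mk',
        LinearMap.coe_mk, AddHom.coe_mk, mul_assoc]
    -- ψ(δ e) has zero real part
    have hδe := tripleDeriv_tripotent hδ he
    have h1 : (ψ (δ e)).re = 0 := by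
      rw [hψ]
      nth_rewrite 1 [hδe]
      simp [Complex.sub_re, Complex.add_re, Complex.conj_re]
      ring
    -- (φ y).re = (ψ (T e)).re
    have h2 : (φ y).re = (ψ (T e)).re := by
      rw [hψ, hy]
      simp [Complex.sub_re, Complex.add_re, Complex.conj_re]
      ring
    rw [h2, hφδ, h1]
  have key2 : ∀ φ : A →L[ℂ] ℂ, φ y = 0 := by
    intro φ
    have h1 := key φ
    have h2 := key (Complex.I • φ)
    simp only [ContinuousLinearMap.smul_apply, smul_eq_mul, Complex.mul_re,
      Complex.I_re, Complex.I_im, zero_mul, one_mul, zero_sub, neg_eq_zero] at h2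
    exact Complex.ext h1 h2
  have hy0 : y = 0 := by
    apply NormedSpace.eq_zero_of_forall_dual_eq_zero ℂ
    exact key2
  rw [hy] at hy0
  exact sub_eq_zero.mp hy0
end

section
/- Let T : A → A be a linear map on a C*-algebra A such that T(e) = 2{e,e,T(e)} + {e,T(e),e} for every partial isometry e in A. If u and v are orthogonal partial isometries in A (u v* = 0 and v* u = 0), then {v,v,T(u)} + {u,T(v),v} = 0. -/
variable {A : Type*} [NonUnitalNormedRing A] [StarRing A] [CStarRing A]
  [NormedSpace ℂ A] [IsScalarTower ℂ A A] [SMulCommClass ℂ A A]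
  [StarModule ℂ A] [CompleteSpace A]

/-- If a linear map `T` satisfies `T e = 2{e,e,T e} + {e,T e,e}` for every partial
isometry `e`, and `u ⊥ v` are orthogonal partial isometries, then
`{v,v,T u} + {u,T v,v} = 0`. -/
theorem stmt8 (T : A → A) (hlin : IsLinearMap ℂ T)
    (hT : ∀ e : A, e * star e * e = e →
      T e = (2 : ℂ) • tp e e (T e) + tp e (T e) e)
    (u v : A) (hu : u * star u * u = u) (hv : v * star v * v = v)
    (huv : u * star v = 0) (hvu : star v * u = 0) :
    tp v v (T u) + tp u (T v) v = 0 := by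
  have h3 : v * star u = 0 := by
    simpa [star_mul] using congrArg star huv
  have h4 : star u * v = 0 := by
    simpa [star_mul] using congrArg star hvu
  have h1' : ∀ w : A, u * (star v * w) = 0 := fun w => by rw [← mul_assoc, huv, zero_mul]
  have h3' : ∀ w : A, v * (star u * w) = 0 := fun w => by rw [← mul_assoc, h3, zero_mul]
  have hu' : u * (star u * u) = u := by rw [← mul_assoc]; exact hu
  have hv' : v * (star v * v) = v := by rw [← mul_assoc]; exact hv
  -- u + c • v is a partial isometry for unimodular c
  have pm : ∀ c : ℂ, star c * c = 1 →
      (u + c • v) * star (u + c • v) * (u + c • v) = u + c • v := by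
    intro c hc
    simp only [star_add, star_smul, mul_add, add_mul, smul_mul_assoc, mul_smul_comm,
      smul_smul, mul_assoc, h1', h3', hvu, h4, mul_zero, zero_mul, smul_zero,
      add_zero, zero_add, hu', hv']
    match_scalars
    · ring
    · linear_combination c * hc
  have E : ∀ c : ℂ, star c * c = 1 →
      (2:ℂ) • tp (u + c • v) (u + c • v) (T u + c • T v)
        + tp (u + c • v) (T u + c • T v) (u + c • v) - (T u + c • T v) = 0 := by
    intro c hc
    have h := hT (u + c • v) (pm c hc)
    rw [hlin.map_add, hlin.map_smul] at h
    rw [← h]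
    exact sub_self _
  have E0 : (2:ℂ) • tp u u (T u) + tp u (T u) u - T u = 0 := by
    rw [← hT u hu]; exact sub_self _
  have hc1 : star (1:ℂ) * 1 = 1 := by simp
  have hc2 : star (-1:ℂ) * (-1) = 1 := by simp
  have hc3 : star Complex.I * Complex.I = 1 := by
    simp [Complex.star_def, Complex.conj_I, Complex.I_mul_I]
  have hc4 : star (-Complex.I) * (-Complex.I) = 1 := by
    simp [Complex.star_def, Complex.conj_I, Complex.I_mul_I]
  have big : (8:ℂ) • (tp v v (T u) + tp u (T v) v) =
      ((2:ℂ) • tp (u + (1:ℂ) • v) (u + (1:ℂ) • v) (T u + (1:ℂ) • T v)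
        + tp (u + (1:ℂ) • v) (T u + (1:ℂ) • T v) (u + (1:ℂ) • v) - (T u + (1:ℂ) • T v))
    + ((2:ℂ) • tp (u + (-1:ℂ) • v) (u + (-1:ℂ) • v) (T u + (-1:ℂ) • T v)
        + tp (u + (-1:ℂ) • v) (T u + (-1:ℂ) • T v) (u + (-1:ℂ) • v) - (T u + (-1:ℂ) • T v))
    + ((2:ℂ) • tp (u + Complex.I • v) (u + Complex.I • v) (T u + Complex.I • T v)
        + tp (u + Complex.I • v) (T u + Complex.I • T v) (u + Complex.I • v)
        - (T u + Complex.I • T v))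
    + ((2:ℂ) • tp (u + (-Complex.I) • v) (u + (-Complex.I) • v) (T u + (-Complex.I) • T v)
        + tp (u + (-Complex.I) • v) (T u + (-Complex.I) • T v) (u + (-Complex.I) • v)
        - (T u + (-Complex.I) • T v))
    - (4:ℂ) • ((2:ℂ) • tp u u (T u) + tp u (T u) u - T u) := by
    simp only [tp, star_add, star_smul, smul_add, smul_sub, smul_smul, mul_add, add_mul,
      smul_mul_assoc, mul_smul_comm, mul_assoc, h1', h3', hvu, h4, mul_zero, zero_mul,
      smul_zero, add_zero, zero_add, map_one, map_neg, Complex.conj_I]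
    match_scalars <;> simp [Complex.star_def, Complex.conj_I] <;> ring
  have h8 : (8:ℂ) • (tp v v (T u) + tp u (T v) v) = 0 := by
    rw [big, E 1 hc1, E (-1) hc2, E Complex.I hc3, E (-Complex.I) hc4, E0]
    simp
  have := inv_smul_smul₀ (by norm_num : (8:ℂ) ≠ 0) (tp v v (T u) + tp u (T v) v)
  rw [← this, h8, smul_zero]
end

section
/- Let T : A → A be a linear map on a C*-algebra A such that T(e) = 2{e,e,T(e)} + {e,T(e),e} for every partial isometry e in A. Then T{a,a,a} = 2{T(a),a,a} + {a,T(a),a} for every a ∈ A of the form a = λ₁e₁ + ⋯ + λₙeₙ, where λ₁,…,λₙ are real numbers and e₁,…,eₙ are mutually orthogonal partial isometries in A (eᵢ eⱼ* = 0 and eⱼ* eᵢ = 0 for i ≠ j). -/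
variable {A : Type*} [NonUnitalNormedRing A] [StarRing A] [CStarRing A]
  [NormedSpace ℂ A] [IsScalarTower ℂ A A] [SMulCommClass ℂ A A]
  [StarModule ℂ A] [CompleteSpace A]

set_option linter.unusedSectionVars false
set_option linter.unusedTactic false
set_option maxHeartbeats 1000000

section AuxLemmas

lemma aux_tp_comm (a b c : A) : tp a b c = tp c b a := by
  unfold tp; rw [add_comm]

lemma aux_tp_sum_left {ι : Type*} (s : Finset ι) (g : ι → A) (b c : A) :
    tp (∑ i ∈ s, g i) b c = ∑ i ∈ s, tp (g i) b c := by
  unfold tp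
  rw [Finset.sum_mul, Finset.sum_mul, Finset.mul_sum, ← Finset.sum_add_distrib,
    Finset.smul_sum]

lemma aux_tp_sum_mid {ι : Type*} (s : Finset ι) (a : A) (g : ι → A) (c : A) :
    tp a (∑ i ∈ s, g i) c = ∑ i ∈ s, tp a (g i) c := by
  unfold tp
  rw [star_sum, Finset.mul_sum, Finset.sum_mul, Finset.mul_sum, Finset.sum_mul,
    ← Finset.sum_add_distrib, Finset.smul_sum]

lemma aux_tp_sum_right {ι : Type*} (s : Finset ι) (a b : A) (g : ι → A) :
    tp a b (∑ i ∈ s, g i) = ∑ i ∈ s, tp a b (g i) := by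
  unfold tp
  rw [Finset.mul_sum, Finset.sum_mul, Finset.sum_mul, ← Finset.sum_add_distrib,
    Finset.smul_sum]

lemma aux_tp_smul_left (r : ℂ) (a b c : A) : tp (r • a) b c = r • tp a b c := by
  unfold tp; simp only [smul_mul_assoc, mul_smul_comm]; module

lemma aux_tp_smul_mid (r : ℝ) (a b c : A) : tp a ((r : ℂ) • b) c = (r : ℂ) • tp a b c := by
  unfold tp
  simp only [star_smul, Complex.star_def, Complex.conj_ofReal, smul_mul_assoc, mul_smul_comm]
  module

lemma aux_tp_smul_right (r : ℂ) (a b c : A) : tp a b (r • c) = r • tp a b c := by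
  unfold tp; simp only [smul_mul_assoc, mul_smul_comm]; module

lemma aux_tp_expand {n : ℕ} (c d f : Fin n → ℝ) (x y z : Fin n → A) :
    tp (∑ p, (c p : ℂ) • x p) (∑ q, (d q : ℂ) • y q) (∑ r, (f r : ℂ) • z r)
      = ∑ p, (c p : ℂ) • ∑ q, (d q : ℂ) • ∑ r, (f r : ℂ) • tp (x p) (y q) (z r) := by
  rw [aux_tp_sum_left]
  refine Finset.sum_congr rfl fun p _ => ?_
  rw [aux_tp_smul_left]
  congr 1
  rw [aux_tp_sum_mid]
  refine Finset.sum_congr rfl fun q _ => ?_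
  rw [aux_tp_smul_mid]
  congr 1
  rw [aux_tp_sum_right]
  exact Finset.sum_congr rfl fun r _ => aux_tp_smul_right _ _ _ _

lemma aux_sum3_comm12 {n : ℕ} (F : Fin n → Fin n → Fin n → A) :
    (∑ p, ∑ q, ∑ r, F p q r) = ∑ p, ∑ q, ∑ r, F q p r :=
  Finset.sum_comm

lemma aux_sum3_comm23 {n : ℕ} (F : Fin n → Fin n → Fin n → A) :
    (∑ p, ∑ q, ∑ r, F p q r) = ∑ p, ∑ q, ∑ r, F p r q :=
  Finset.sum_congr rfl fun _ _ => Finset.sum_comm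

lemma aux_sum3_comm13 {n : ℕ} (F : Fin n → Fin n → Fin n → A) :
    (∑ p, ∑ q, ∑ r, F p q r) = ∑ p, ∑ q, ∑ r, F r q p :=
  calc (∑ p, ∑ q, ∑ r, F p q r)
      = ∑ p, ∑ q, ∑ r, F p r q := aux_sum3_comm23 F
    _ = ∑ p, ∑ q, ∑ r, F q r p := aux_sum3_comm12 (fun p q r => F p r q)
    _ = ∑ p, ∑ q, ∑ r, F r q p := aux_sum3_comm23 (fun p q r => F q r p)

lemma aux_sum3_cycA {n : ℕ} (F : Fin n → Fin n → Fin n → A) :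
    (∑ p, ∑ q, ∑ r, F p q r) = ∑ p, ∑ q, ∑ r, F q r p :=
  (aux_sum3_comm23 F).trans (aux_sum3_comm12 (fun p q r => F p r q))

lemma aux_sum3_cycB {n : ℕ} (F : Fin n → Fin n → Fin n → A) :
    (∑ p, ∑ q, ∑ r, F p q r) = ∑ p, ∑ q, ∑ r, F r p q :=
  (aux_sum3_comm12 F).trans (aux_sum3_comm23 (fun p q r => F q p r))

lemma aux_tripleCongr {n : ℕ} (f g : Fin n → Fin n → Fin n → A)
    (h : ∀ p q r, f p q r = g p q r) :
    (∑ p, ∑ q, ∑ r, f p q r) = ∑ p, ∑ q, ∑ r, g p q r :=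
  Finset.sum_congr rfl fun p _ => Finset.sum_congr rfl fun q _ =>
    Finset.sum_congr rfl fun r _ => h p q r

-- nested (scalar-weighted) triple sums
lemma aux_nested_push {n : ℕ} (c : Fin n → ℝ) (X : Fin n → Fin n → Fin n → A) :
    (∑ p, (c p : ℂ) • ∑ q, (c q : ℂ) • ∑ r, (c r : ℂ) • X p q r)
      = ∑ p, ∑ q, ∑ r, (c p : ℂ) • ((c q : ℂ) • ((c r : ℂ) • X p q r)) := by
  simp only [Finset.smul_sum]

lemma aux_nested_perm12 {n : ℕ} (c : Fin n → ℝ) (X : Fin n → Fin n → Fin n → A) :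
    (∑ p, (c p : ℂ) • ∑ q, (c q : ℂ) • ∑ r, (c r : ℂ) • X p q r)
      = ∑ p, (c p : ℂ) • ∑ q, (c q : ℂ) • ∑ r, (c r : ℂ) • X q p r := by
  rw [aux_nested_push, aux_nested_push,
    aux_sum3_comm12 (fun p q r => (c p : ℂ) • ((c q : ℂ) • ((c r : ℂ) • X p q r)))]
  exact aux_tripleCongr _ _ fun p q r => by
    simp only [smul_smul]; congr 1; ring

lemma aux_nested_perm23 {n : ℕ} (c : Fin n → ℝ) (X : Fin n → Fin n → Fin n → A) :
    (∑ p, (c p : ℂ) • ∑ q, (c q : ℂ) • ∑ r, (c r : ℂ) • X p q r)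
      = ∑ p, (c p : ℂ) • ∑ q, (c q : ℂ) • ∑ r, (c r : ℂ) • X p r q := by
  rw [aux_nested_push, aux_nested_push,
    aux_sum3_comm23 (fun p q r => (c p : ℂ) • ((c q : ℂ) • ((c r : ℂ) • X p q r)))]
  exact aux_tripleCongr _ _ fun p q r => by
    simp only [smul_smul]; congr 1; ring

lemma aux_nested_perm13 {n : ℕ} (c : Fin n → ℝ) (X : Fin n → Fin n → Fin n → A) :
    (∑ p, (c p : ℂ) • ∑ q, (c q : ℂ) • ∑ r, (c r : ℂ) • X p q r)
      = ∑ p, (c p : ℂ) • ∑ q, (c q : ℂ) • ∑ r, (c r : ℂ) • X r q p := by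
  rw [aux_nested_push, aux_nested_push,
    aux_sum3_comm13 (fun p q r => (c p : ℂ) • ((c q : ℂ) • ((c r : ℂ) • X p q r)))]
  exact aux_tripleCongr _ _ fun p q r => by
    simp only [smul_smul]; congr 1; ring

lemma aux_nested_cycA {n : ℕ} (c : Fin n → ℝ) (X : Fin n → Fin n → Fin n → A) :
    (∑ p, (c p : ℂ) • ∑ q, (c q : ℂ) • ∑ r, (c r : ℂ) • X p q r)
      = ∑ p, (c p : ℂ) • ∑ q, (c q : ℂ) • ∑ r, (c r : ℂ) • X q r p := by
  rw [aux_nested_push, aux_nested_push,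
    aux_sum3_cycA (fun p q r => (c p : ℂ) • ((c q : ℂ) • ((c r : ℂ) • X p q r)))]
  exact aux_tripleCongr _ _ fun p q r => by
    simp only [smul_smul]; congr 1; ring

lemma aux_nested_cycB {n : ℕ} (c : Fin n → ℝ) (X : Fin n → Fin n → Fin n → A) :
    (∑ p, (c p : ℂ) • ∑ q, (c q : ℂ) • ∑ r, (c r : ℂ) • X p q r)
      = ∑ p, (c p : ℂ) • ∑ q, (c q : ℂ) • ∑ r, (c r : ℂ) • X r p q := by
  rw [aux_nested_push, aux_nested_push,
    aux_sum3_cycB (fun p q r => (c p : ℂ) • ((c q : ℂ) • ((c r : ℂ) • X p q r)))]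
  exact aux_tripleCongr _ _ fun p q r => by
    simp only [smul_smul]; congr 1; ring

lemma aux_nested_add {n : ℕ} (c : Fin n → ℝ) (X Y : Fin n → Fin n → Fin n → A) :
    ((∑ p, (c p : ℂ) • ∑ q, (c q : ℂ) • ∑ r, (c r : ℂ) • X p q r)
      + ∑ p, (c p : ℂ) • ∑ q, (c q : ℂ) • ∑ r, (c r : ℂ) • Y p q r)
      = ∑ p, (c p : ℂ) • ∑ q, (c q : ℂ) • ∑ r, (c r : ℂ) • (X p q r + Y p q r) := by
  rw [← Finset.sum_add_distrib]
  refine Finset.sum_congr rfl fun p _ => ?_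
  rw [← smul_add]; congr 1
  rw [← Finset.sum_add_distrib]
  refine Finset.sum_congr rfl fun q _ => ?_
  rw [← smul_add]; congr 1
  rw [← Finset.sum_add_distrib]
  exact Finset.sum_congr rfl fun r _ => (smul_add _ _ _).symm

lemma aux_nested_smul {n : ℕ} (z : ℂ) (c : Fin n → ℝ) (X : Fin n → Fin n → Fin n → A) :
    (z • ∑ p, (c p : ℂ) • ∑ q, (c q : ℂ) • ∑ r, (c r : ℂ) • X p q r)
      = ∑ p, (c p : ℂ) • ∑ q, (c q : ℂ) • ∑ r, (c r : ℂ) • (z • X p q r) := by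
  rw [Finset.smul_sum]
  refine Finset.sum_congr rfl fun p _ => ?_
  rw [smul_comm]; congr 1
  rw [Finset.smul_sum]
  refine Finset.sum_congr rfl fun q _ => ?_
  rw [smul_comm]; congr 1
  rw [Finset.smul_sum]
  exact Finset.sum_congr rfl fun r _ => smul_comm _ _ _

lemma aux_merge {n : ℕ} (c : Fin n → ℝ) (X Y : Fin n → Fin n → Fin n → A) :
    ((2 : ℂ) • (∑ p, (c p : ℂ) • ∑ q, (c q : ℂ) • ∑ r, (c r : ℂ) • X p q r)
      + ∑ p, (c p : ℂ) • ∑ q, (c q : ℂ) • ∑ r, (c r : ℂ) • Y p q r)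
      = ∑ p, (c p : ℂ) • ∑ q, (c q : ℂ) • ∑ r, (c r : ℂ) • ((2 : ℂ) • X p q r + Y p q r) := by
  rw [aux_nested_smul, aux_nested_add]

-- sparse reductions
lemma aux_reduce2 {n : ℕ} (c : Fin n → ℝ) (i j : Fin n) (hij : i ≠ j)
    (h0 : ∀ p, p ≠ i → p ≠ j → c p = 0) (f : Fin n → A) :
    ∑ p, (c p : ℂ) • f p = (c i : ℂ) • f i + (c j : ℂ) • f j := by
  have h1 : ∑ p ∈ ({i, j} : Finset (Fin n)), (c p : ℂ) • f p = ∑ p, (c p : ℂ) • f p := by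
    apply Finset.sum_subset (Finset.subset_univ _)
    intro p _ hp
    simp only [Finset.mem_insert, Finset.mem_singleton, not_or] at hp
    rw [h0 p hp.1 hp.2]; simp
  rw [← h1, Finset.sum_insert (by simp [hij]), Finset.sum_singleton]

lemma aux_reduce3 {n : ℕ} (c : Fin n → ℝ) (i j k : Fin n) (hij : i ≠ j) (hik : i ≠ k)
    (hjk : j ≠ k) (h0 : ∀ p, p ≠ i → p ≠ j → p ≠ k → c p = 0) (f : Fin n → A) :
    ∑ p, (c p : ℂ) • f p = (c i : ℂ) • f i + ((c j : ℂ) • f j + (c k : ℂ) • f k) := by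
  have h1 : ∑ p ∈ ({i, j, k} : Finset (Fin n)), (c p : ℂ) • f p = ∑ p, (c p : ℂ) • f p := by
    apply Finset.sum_subset (Finset.subset_univ _)
    intro p _ hp
    simp only [Finset.mem_insert, Finset.mem_singleton, not_or] at hp
    rw [h0 p hp.1 hp.2.1 hp.2.2]; simp
  rw [← h1, Finset.sum_insert (by simp [hij, hik]), Finset.sum_insert (by simp [hjk]),
    Finset.sum_singleton]

lemma aux_cube {n : ℕ} (e : Fin n → A)
    (he : ∀ i, e i * star (e i) * e i = e i)
    (horth : ∀ i j, i ≠ j → e i * star (e j) = 0 ∧ star (e j) * e i = 0)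
    (c : Fin n → ℝ) :
    (∑ p, (c p : ℂ) • e p) * star (∑ p, (c p : ℂ) • e p) * (∑ p, (c p : ℂ) • e p)
      = ∑ p, ((c p * c p * c p : ℝ) : ℂ) • e p := by
  have hstar : star (∑ p, (c p : ℂ) • e p) = ∑ p, (c p : ℂ) • star (e p) := by
    rw [star_sum]
    exact Finset.sum_congr rfl fun p _ => by
      rw [star_smul, Complex.star_def, Complex.conj_ofReal]
  have h1 : (∑ p, (c p : ℂ) • e p) * star (∑ p, (c p : ℂ) • e p)
      = ∑ p, ((c p : ℂ) * (c p : ℂ)) • (e p * star (e p)) := by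
    rw [hstar, Finset.sum_mul]
    refine Finset.sum_congr rfl fun p _ => ?_
    rw [Finset.mul_sum, Finset.sum_eq_single p]
    · rw [smul_mul_assoc, mul_smul_comm, smul_smul]
    · intro q _ hq
      rw [smul_mul_assoc, mul_smul_comm, (horth p q (Ne.symm hq)).1, smul_zero, smul_zero]
    · intro h; exact absurd (Finset.mem_univ p) h
  rw [h1, Finset.sum_mul]
  refine Finset.sum_congr rfl fun p _ => ?_
  rw [Finset.mul_sum, Finset.sum_eq_single p]
  · rw [smul_mul_assoc, mul_smul_comm, smul_smul, he p]
    congr 1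
    push_cast
    ring
  · intro r _ hr
    rw [smul_mul_assoc, mul_smul_comm, mul_assoc, (horth r p hr).2, mul_zero,
      smul_zero, smul_zero]
  · intro h; exact absurd (Finset.mem_univ p) h

noncomputable def auxG (T : A → A) {n : ℕ} (e : Fin n → A) (p q r : Fin n) : A :=
  (2 : ℂ) • tp (e p) (e q) (T (e r)) + tp (e p) (T (e q)) (e r)

lemma aux_Tsum (T : A → A) (hlin : IsLinearMap ℂ T) {n : ℕ} (c : Fin n → ℝ) (e : Fin n → A) :
    T (∑ p, (c p : ℂ) • e p) = ∑ p, (c p : ℂ) • T (e p) := by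
  have h1 : T (∑ p, (c p : ℂ) • e p) = ∑ p, T ((c p : ℂ) • e p) :=
    map_sum (IsLinearMap.mk' T hlin) _ Finset.univ
  rw [h1]
  exact Finset.sum_congr rfl fun p _ => hlin.map_smul _ _

lemma aux_key (T : A → A) (hlin : IsLinearMap ℂ T)
    (hT : ∀ e : A, e * star e * e = e →
      T e = (2 : ℂ) • tp e e (T e) + tp e (T e) e)
    {n : ℕ} (e : Fin n → A)
    (he : ∀ i, e i * star (e i) * e i = e i)
    (horth : ∀ i j, i ≠ j → e i * star (e j) = 0 ∧ star (e j) * e i = 0)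
    (c : Fin n → ℝ) (hc : ∀ p, c p * c p * c p = c p) :
    ∑ p, (c p : ℂ) • T (e p)
      = ∑ p, (c p : ℂ) • ∑ q, (c q : ℂ) • ∑ r, (c r : ℂ) • auxG T e p q r := by
  have hx : (∑ p, (c p : ℂ) • e p) * star (∑ p, (c p : ℂ) • e p) * (∑ p, (c p : ℂ) • e p)
      = ∑ p, (c p : ℂ) • e p := by
    rw [aux_cube e he horth c]
    exact Finset.sum_congr rfl fun p _ => by rw [hc p]
  calc ∑ p, (c p : ℂ) • T (e p)
      = T (∑ p, (c p : ℂ) • e p) := (aux_Tsum T hlin c e).symm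
    _ = (2 : ℂ) • tp (∑ p, (c p : ℂ) • e p) (∑ p, (c p : ℂ) • e p) (T (∑ p, (c p : ℂ) • e p))
        + tp (∑ p, (c p : ℂ) • e p) (T (∑ p, (c p : ℂ) • e p)) (∑ p, (c p : ℂ) • e p) :=
      hT _ hx
    _ = (2 : ℂ) • tp (∑ p, (c p : ℂ) • e p) (∑ p, (c p : ℂ) • e p) (∑ p, (c p : ℂ) • T (e p))
        + tp (∑ p, (c p : ℂ) • e p) (∑ p, (c p : ℂ) • T (e p)) (∑ p, (c p : ℂ) • e p) := by
      rw [aux_Tsum T hlin c e]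
    _ = (2 : ℂ) • (∑ p, (c p : ℂ) • ∑ q, (c q : ℂ) • ∑ r, (c r : ℂ) • tp (e p) (e q) (T (e r)))
        + ∑ p, (c p : ℂ) • ∑ q, (c q : ℂ) • ∑ r, (c r : ℂ) • tp (e p) (T (e q)) (e r) := by
      exact congrArg₂ (fun u v => (2 : ℂ) • u + v)
        (aux_tp_expand c c c e e (fun p => T (e p)))
        (aux_tp_expand c c c e (fun p => T (e p)) e)
    _ = ∑ p, (c p : ℂ) • ∑ q, (c q : ℂ) • ∑ r, (c r : ℂ) • auxG T e p q r :=
      aux_merge c _ _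

section
variable (T : A → A) (hlin : IsLinearMap ℂ T)
    (hT : ∀ e : A, e * star e * e = e →
      T e = (2 : ℂ) • tp e e (T e) + tp e (T e) e)
    {n : ℕ} (e : Fin n → A)
    (he : ∀ i, e i * star (e i) * e i = e i)
    (horth : ∀ i j, i ≠ j → e i * star (e j) = 0 ∧ star (e j) * e i = 0)

include hT he in
lemma aux_R1 (p : Fin n) : auxG T e p p p = T (e p) :=
  (hT (e p) (he p)).symm

include hlin hT he horth in
lemma aux_R2 (i j : Fin n) (hij : i ≠ j) :
    auxG T e i j j + auxG T e j i j + auxG T e j j i = 0 := by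
  have h₁ := aux_key T hlin hT e he horth
    (fun p => if p = i then 1 else if p = j then 1 else 0)
    (by intro p; split_ifs <;> norm_num)
  have h₂ := aux_key T hlin hT e he horth
    (fun p => if p = i then 1 else if p = j then -1 else 0)
    (by intro p; split_ifs <;> norm_num)
  have red₁ := aux_reduce2 (A := A) (fun p => if p = i then (1 : ℝ) else if p = j then 1 else 0)
    i j hij (by intro p h1 h2; simp [h1, h2])
  have red₂ := aux_reduce2 (A := A) (fun p => if p = i then (1 : ℝ) else if p = j then -1 else 0)
    i j hij (by intro p h1 h2; simp [h1, h2])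
  beta_reduce at h₁ h₂
  simp only [red₁] at h₁
  simp only [red₂] at h₂
  simp only [if_pos, Ne.symm hij, if_neg, if_true, if_false, eq_self_iff_true,
    Complex.ofReal_one, Complex.ofReal_neg, one_smul, neg_smul] at h₁ h₂
  linear_combination (norm := module) (-(2⁻¹ : ℂ)) • h₁ - (2⁻¹ : ℂ) • h₂
    - aux_R1 T hT e he i

include hlin hT he horth in
lemma aux_R3 (i j k : Fin n) (hij : i ≠ j) (hik : i ≠ k) (hjk : j ≠ k) :
    auxG T e i j k + auxG T e i k j + auxG T e j i k + auxG T e j k i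
      + auxG T e k i j + auxG T e k j i = 0 := by
  have h₁ := aux_key T hlin hT e he horth
    (fun p => if p = i then 1 else if p = j then 1 else if p = k then 1 else 0)
    (by intro p; split_ifs <;> norm_num)
  have h₂ := aux_key T hlin hT e he horth
    (fun p => if p = i then 1 else if p = j then 1 else if p = k then -1 else 0)
    (by intro p; split_ifs <;> norm_num)
  have h₃ := aux_key T hlin hT e he horth
    (fun p => if p = i then 1 else if p = j then -1 else if p = k then 1 else 0)
    (by intro p; split_ifs <;> norm_num)
  have h₄ := aux_key T hlin hT e he horth
    (fun p => if p = i then 1 else if p = j then -1 else if p = k then -1 else 0)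
    (by intro p; split_ifs <;> norm_num)
  have red₁ := aux_reduce3 (A := A)
    (fun p => if p = i then (1 : ℝ) else if p = j then 1 else if p = k then 1 else 0)
    i j k hij hik hjk (by intro p h1 h2 h3; simp [h1, h2, h3])
  have red₂ := aux_reduce3 (A := A)
    (fun p => if p = i then (1 : ℝ) else if p = j then 1 else if p = k then -1 else 0)
    i j k hij hik hjk (by intro p h1 h2 h3; simp [h1, h2, h3])
  have red₃ := aux_reduce3 (A := A)
    (fun p => if p = i then (1 : ℝ) else if p = j then -1 else if p = k then 1 else 0)
    i j k hij hik hjk (by intro p h1 h2 h3; simp [h1, h2, h3])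
  have red₄ := aux_reduce3 (A := A)
    (fun p => if p = i then (1 : ℝ) else if p = j then -1 else if p = k then -1 else 0)
    i j k hij hik hjk (by intro p h1 h2 h3; simp [h1, h2, h3])
  beta_reduce at h₁ h₂ h₃ h₄
  beta_reduce at h₁ h₂
  simp only [red₁] at h₁
  simp only [red₂] at h₂
  simp only [red₃] at h₃
  simp only [red₄] at h₄
  simp only [if_pos, Ne.symm hij, Ne.symm hik, Ne.symm hjk, if_neg, if_true, if_false,
    eq_self_iff_true, Complex.ofReal_one, Complex.ofReal_neg, one_smul, neg_smul] at h₁ h₂ h₃ h₄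
  linear_combination (norm := module) (-(4⁻¹ : ℂ)) • h₁ + (4⁻¹ : ℂ) • h₂ + (4⁻¹ : ℂ) • h₃
    - (4⁻¹ : ℂ) • h₄

end

section
variable (T : A → A) (hlin : IsLinearMap ℂ T)
    (hT : ∀ e : A, e * star e * e = e →
      T e = (2 : ℂ) • tp e e (T e) + tp e (T e) e)
    {n : ℕ} (e : Fin n → A)
    (he : ∀ i, e i * star (e i) * e i = e i)
    (horth : ∀ i j, i ≠ j → e i * star (e j) = 0 ∧ star (e j) * e i = 0)

include hlin hT he horth in
lemma aux_Hzero (p q r : Fin n) (hne : ¬(p = q ∧ q = r)) :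
    auxG T e p q r + (auxG T e p r q + (auxG T e q p r + (auxG T e q r p
      + (auxG T e r p q + auxG T e r q p)))) = 0 := by
  by_cases h1 : p = q
  · subst h1
    have h2 : p ≠ r := fun h => hne ⟨rfl, h⟩
    linear_combination (norm := module)
      (2 : ℂ) • aux_R2 T hlin hT e he horth r p (Ne.symm h2)
  · by_cases h2 : q = r
    · subst h2
      linear_combination (norm := module) (2 : ℂ) • aux_R2 T hlin hT e he horth p q h1
    · by_cases h3 : p = r
      · subst h3
        linear_combination (norm := module)
          (2 : ℂ) • aux_R2 T hlin hT e he horth q p (Ne.symm h1)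
      · linear_combination (norm := module) aux_R3 T hlin hT e he horth p q r h1 h3 h2

include hT he in
lemma aux_Hdiag (p : Fin n) :
    auxG T e p p p + (auxG T e p p p + (auxG T e p p p + (auxG T e p p p
      + (auxG T e p p p + auxG T e p p p)))) = (6 : ℂ) • T (e p) := by
  linear_combination (norm := module) (6 : ℂ) • aux_R1 T hT e he p

end

lemma aux_final (T : A → A) (hlin : IsLinearMap ℂ T)
    (hT : ∀ e : A, e * star e * e = e →
      T e = (2 : ℂ) • tp e e (T e) + tp e (T e) e)
    {n : ℕ} (e : Fin n → A)
    (he : ∀ i, e i * star (e i) * e i = e i)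
    (horth : ∀ i j, i ≠ j → e i * star (e j) = 0 ∧ star (e j) * e i = 0)
    (lam : Fin n → ℝ) :
    (∑ p, (lam p : ℂ) • ∑ q, (lam q : ℂ) • ∑ r, (lam r : ℂ) • auxG T e p q r)
      = ∑ p, ((lam p * lam p * lam p : ℝ) : ℂ) • T (e p) := by
  -- six permuted copies of W
  have p2 : (∑ p, (lam p : ℂ) • ∑ q, (lam q : ℂ) • ∑ r, (lam r : ℂ) • auxG T e p q r)
      = ∑ p, (lam p : ℂ) • ∑ q, (lam q : ℂ) • ∑ r, (lam r : ℂ) • auxG T e p r q :=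
    aux_nested_perm23 lam (fun p q r => auxG T e p q r)
  have p3 : (∑ p, (lam p : ℂ) • ∑ q, (lam q : ℂ) • ∑ r, (lam r : ℂ) • auxG T e p q r)
      = ∑ p, (lam p : ℂ) • ∑ q, (lam q : ℂ) • ∑ r, (lam r : ℂ) • auxG T e q p r :=
    aux_nested_perm12 lam (fun p q r => auxG T e p q r)
  have p4 : (∑ p, (lam p : ℂ) • ∑ q, (lam q : ℂ) • ∑ r, (lam r : ℂ) • auxG T e p q r)
      = ∑ p, (lam p : ℂ) • ∑ q, (lam q : ℂ) • ∑ r, (lam r : ℂ) • auxG T e q r p :=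
    aux_nested_cycA lam (fun p q r => auxG T e p q r)
  have p5 : (∑ p, (lam p : ℂ) • ∑ q, (lam q : ℂ) • ∑ r, (lam r : ℂ) • auxG T e p q r)
      = ∑ p, (lam p : ℂ) • ∑ q, (lam q : ℂ) • ∑ r, (lam r : ℂ) • auxG T e r p q :=
    aux_nested_cycB lam (fun p q r => auxG T e p q r)
  have p6 : (∑ p, (lam p : ℂ) • ∑ q, (lam q : ℂ) • ∑ r, (lam r : ℂ) • auxG T e p q r)
      = ∑ p, (lam p : ℂ) • ∑ q, (lam q : ℂ) • ∑ r, (lam r : ℂ) • auxG T e r q p :=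
    aux_nested_perm13 lam (fun p q r => auxG T e p q r)
  -- assemble the symmetrized sum
  have grand : (∑ p, (lam p : ℂ) • ∑ q, (lam q : ℂ) • ∑ r, (lam r : ℂ) •
        (auxG T e p q r + (auxG T e p r q + (auxG T e q p r + (auxG T e q r p
          + (auxG T e r p q + auxG T e r q p))))))
      = (6 : ℂ) • ∑ p, (lam p : ℂ) • ∑ q, (lam q : ℂ) • ∑ r, (lam r : ℂ) • auxG T e p q r := by
    calc (∑ p, (lam p : ℂ) • ∑ q, (lam q : ℂ) • ∑ r, (lam r : ℂ) •
        (auxG T e p q r + (auxG T e p r q + (auxG T e q p r + (auxG T e q r p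
          + (auxG T e r p q + auxG T e r q p))))))
        = (∑ p, (lam p : ℂ) • ∑ q, (lam q : ℂ) • ∑ r, (lam r : ℂ) • auxG T e p q r)
          + ∑ p, (lam p : ℂ) • ∑ q, (lam q : ℂ) • ∑ r, (lam r : ℂ) •
            (auxG T e p r q + (auxG T e q p r + (auxG T e q r p
              + (auxG T e r p q + auxG T e r q p)))) := (aux_nested_add lam _ _).symm
      _ = (∑ p, (lam p : ℂ) • ∑ q, (lam q : ℂ) • ∑ r, (lam r : ℂ) • auxG T e p q r)
          + ((∑ p, (lam p : ℂ) • ∑ q, (lam q : ℂ) • ∑ r, (lam r : ℂ) • auxG T e p r q)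
          + ∑ p, (lam p : ℂ) • ∑ q, (lam q : ℂ) • ∑ r, (lam r : ℂ) •
            (auxG T e q p r + (auxG T e q r p + (auxG T e r p q + auxG T e r q p)))) :=
        congrArg _ (aux_nested_add lam _ _).symm
      _ = (∑ p, (lam p : ℂ) • ∑ q, (lam q : ℂ) • ∑ r, (lam r : ℂ) • auxG T e p q r)
          + ((∑ p, (lam p : ℂ) • ∑ q, (lam q : ℂ) • ∑ r, (lam r : ℂ) • auxG T e p r q)
          + ((∑ p, (lam p : ℂ) • ∑ q, (lam q : ℂ) • ∑ r, (lam r : ℂ) • auxG T e q p r)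
          + ∑ p, (lam p : ℂ) • ∑ q, (lam q : ℂ) • ∑ r, (lam r : ℂ) •
            (auxG T e q r p + (auxG T e r p q + auxG T e r q p)))) :=
        congrArg _ (congrArg _ (aux_nested_add lam _ _).symm)
      _ = (∑ p, (lam p : ℂ) • ∑ q, (lam q : ℂ) • ∑ r, (lam r : ℂ) • auxG T e p q r)
          + ((∑ p, (lam p : ℂ) • ∑ q, (lam q : ℂ) • ∑ r, (lam r : ℂ) • auxG T e p r q)
          + ((∑ p, (lam p : ℂ) • ∑ q, (lam q : ℂ) • ∑ r, (lam r : ℂ) • auxG T e q p r)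
          + ((∑ p, (lam p : ℂ) • ∑ q, (lam q : ℂ) • ∑ r, (lam r : ℂ) • auxG T e q r p)
          + ∑ p, (lam p : ℂ) • ∑ q, (lam q : ℂ) • ∑ r, (lam r : ℂ) •
            (auxG T e r p q + auxG T e r q p)))) :=
        congrArg _ (congrArg _ (congrArg _ (aux_nested_add lam _ _).symm))
      _ = (∑ p, (lam p : ℂ) • ∑ q, (lam q : ℂ) • ∑ r, (lam r : ℂ) • auxG T e p q r)
          + ((∑ p, (lam p : ℂ) • ∑ q, (lam q : ℂ) • ∑ r, (lam r : ℂ) • auxG T e p r q)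
          + ((∑ p, (lam p : ℂ) • ∑ q, (lam q : ℂ) • ∑ r, (lam r : ℂ) • auxG T e q p r)
          + ((∑ p, (lam p : ℂ) • ∑ q, (lam q : ℂ) • ∑ r, (lam r : ℂ) • auxG T e q r p)
          + ((∑ p, (lam p : ℂ) • ∑ q, (lam q : ℂ) • ∑ r, (lam r : ℂ) • auxG T e r p q)
          + ∑ p, (lam p : ℂ) • ∑ q, (lam q : ℂ) • ∑ r, (lam r : ℂ) • auxG T e r q p)))) :=
        congrArg _ (congrArg _ (congrArg _ (congrArg _ (aux_nested_add lam _ _).symm)))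
      _ = (6 : ℂ) • ∑ p, (lam p : ℂ) • ∑ q, (lam q : ℂ) • ∑ r, (lam r : ℂ) • auxG T e p q r := by
        rw [← p2, ← p3, ← p4, ← p5, ← p6]; module
  -- collapse the symmetrized sum using Hzero/Hdiag
  have collapse : (∑ p, (lam p : ℂ) • ∑ q, (lam q : ℂ) • ∑ r, (lam r : ℂ) •
        (auxG T e p q r + (auxG T e p r q + (auxG T e q p r + (auxG T e q r p
          + (auxG T e r p q + auxG T e r q p))))))
      = (6 : ℂ) • ∑ p, ((lam p * lam p * lam p : ℝ) : ℂ) • T (e p) := by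
    have step : ∀ p : Fin n, (∑ q, (lam q : ℂ) • ∑ r, (lam r : ℂ) •
        (auxG T e p q r + (auxG T e p r q + (auxG T e q p r + (auxG T e q r p
          + (auxG T e r p q + auxG T e r q p))))))
        = (lam p : ℂ) • ((lam p : ℂ) • ((6 : ℂ) • T (e p))) := by
      intro p
      rw [Finset.sum_eq_single p]
      · rw [Finset.sum_eq_single p]
        · rw [aux_Hdiag T hT e he p]
        · intro r _ hr
          rw [aux_Hzero T hlin hT e he horth p p r (fun h => hr h.2.symm), smul_zero]
        · intro h; exact absurd (Finset.mem_univ p) h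
      · intro q _ hq
        rw [Finset.sum_eq_zero, smul_zero]
        intro r _
        rw [aux_Hzero T hlin hT e he horth p q r (fun h => hq h.1.symm), smul_zero]
      · intro h; exact absurd (Finset.mem_univ p) h
    calc (∑ p, (lam p : ℂ) • ∑ q, (lam q : ℂ) • ∑ r, (lam r : ℂ) •
        (auxG T e p q r + (auxG T e p r q + (auxG T e q p r + (auxG T e q r p
          + (auxG T e r p q + auxG T e r q p))))))
        = ∑ p, (lam p : ℂ) • ((lam p : ℂ) • ((lam p : ℂ) • ((6 : ℂ) • T (e p)))) :=
          Finset.sum_congr rfl fun p _ => congrArg _ (step p)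
      _ = ∑ p, ((lam p * lam p * lam p : ℝ) : ℂ) • ((6 : ℂ) • T (e p)) :=
          Finset.sum_congr rfl fun p _ => by
            simp only [smul_smul]; congr 1; push_cast; ring
      _ = (6 : ℂ) • ∑ p, ((lam p * lam p * lam p : ℝ) : ℂ) • T (e p) := by
          rw [Finset.smul_sum]
          exact Finset.sum_congr rfl fun p _ => (smul_comm _ _ _)
  have h6 : (6 : ℂ) • (∑ p, (lam p : ℂ) • ∑ q, (lam q : ℂ) • ∑ r, (lam r : ℂ) • auxG T e p q r)
      = (6 : ℂ) • ∑ p, ((lam p * lam p * lam p : ℝ) : ℂ) • T (e p) :=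
    grand.symm.trans collapse
  have h7 := congrArg (fun y => (6⁻¹ : ℂ) • y) h6
  simpa [smul_smul, show ((6 : ℂ)⁻¹ * 6) = 1 by norm_num] using h7

end AuxLemmas

/-- If a linear map `T` satisfies `T e = 2{e,e,T e} + {e,T e,e}` for every partial
isometry `e`, then `T{a,a,a} = 2{T a,a,a} + {a,T a,a}` whenever `a` is a finite real
linear combination of mutually orthogonal partial isometries. -/
theorem stmt9 (T : A → A) (hlin : IsLinearMap ℂ T)
    (hT : ∀ e : A, e * star e * e = e →
      T e = (2 : ℂ) • tp e e (T e) + tp e (T e) e)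
    (n : ℕ) (lam : Fin n → ℝ) (e : Fin n → A)
    (he : ∀ i, e i * star (e i) * e i = e i)
    (horth : ∀ i j, i ≠ j → e i * star (e j) = 0 ∧ star (e j) * e i = 0)
    (a : A) (ha : a = ∑ i, (lam i : ℂ) • e i) :
    T (tp a a a) = (2 : ℂ) • tp (T a) a a + tp a (T a) a := by
  subst ha
  have hTa : T (∑ p, (lam p : ℂ) • e p) = ∑ p, (lam p : ℂ) • T (e p) :=
    aux_Tsum T hlin lam e
  rw [hTa]
  -- left-hand side
  have hL : T (tp (∑ p, (lam p : ℂ) • e p) (∑ p, (lam p : ℂ) • e p) (∑ p, (lam p : ℂ) • e p))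
      = ∑ p, ((lam p * lam p * lam p : ℝ) : ℂ) • T (e p) := by
    have h1 : tp (∑ p, (lam p : ℂ) • e p) (∑ p, (lam p : ℂ) • e p) (∑ p, (lam p : ℂ) • e p)
        = ∑ p, ((lam p * lam p * lam p : ℝ) : ℂ) • e p := by
      have h2 : tp (∑ p, (lam p : ℂ) • e p) (∑ p, (lam p : ℂ) • e p) (∑ p, (lam p : ℂ) • e p)
          = (∑ p, (lam p : ℂ) • e p) * star (∑ p, (lam p : ℂ) • e p) * (∑ p, (lam p : ℂ) • e p) := by
        show (2⁻¹ : ℂ) • (((∑ p, (lam p : ℂ) • e p) * star (∑ p, (lam p : ℂ) • e p) * (∑ p, (lam p : ℂ) • e p))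
            + (∑ p, (lam p : ℂ) • e p) * star (∑ p, (lam p : ℂ) • e p) * (∑ p, (lam p : ℂ) • e p))
          = (∑ p, (lam p : ℂ) • e p) * star (∑ p, (lam p : ℂ) • e p) * (∑ p, (lam p : ℂ) • e p)
        rw [← two_smul ℂ ((∑ p, (lam p : ℂ) • e p) * star (∑ p, (lam p : ℂ) • e p) * (∑ p, (lam p : ℂ) • e p)),
          smul_smul]
        norm_num
      rw [h2]
      exact aux_cube e he horth lam
    rw [h1]
    exact aux_Tsum T hlin _ e
  rw [hL]
  -- right-hand side expansions
  have hR1 : tp (∑ p, (lam p : ℂ) • T (e p)) (∑ p, (lam p : ℂ) • e p) (∑ p, (lam p : ℂ) • e p)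
      = ∑ p, (lam p : ℂ) • ∑ q, (lam q : ℂ) • ∑ r, (lam r : ℂ) • tp (T (e p)) (e q) (e r) :=
    aux_tp_expand lam lam lam (fun p => T (e p)) e e
  have hR2 : tp (∑ p, (lam p : ℂ) • e p) (∑ p, (lam p : ℂ) • T (e p)) (∑ p, (lam p : ℂ) • e p)
      = ∑ p, (lam p : ℂ) • ∑ q, (lam q : ℂ) • ∑ r, (lam r : ℂ) • tp (e p) (T (e q)) (e r) :=
    aux_tp_expand lam lam lam e (fun p => T (e p)) e
  rw [hR1, hR2]
  -- swap the T to the third slot in the first triple sum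
  have hswap : (∑ p, (lam p : ℂ) • ∑ q, (lam q : ℂ) • ∑ r, (lam r : ℂ) • tp (T (e p)) (e q) (e r))
      = ∑ p, (lam p : ℂ) • ∑ q, (lam q : ℂ) • ∑ r, (lam r : ℂ) • tp (e p) (e q) (T (e r)) :=
    calc (∑ p, (lam p : ℂ) • ∑ q, (lam q : ℂ) • ∑ r, (lam r : ℂ) • tp (T (e p)) (e q) (e r))
        = ∑ p, (lam p : ℂ) • ∑ q, (lam q : ℂ) • ∑ r, (lam r : ℂ) • tp (T (e r)) (e q) (e p) :=
          aux_nested_perm13 lam (fun p q r => tp (T (e p)) (e q) (e r))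
      _ = ∑ p, (lam p : ℂ) • ∑ q, (lam q : ℂ) • ∑ r, (lam r : ℂ) • tp (e p) (e q) (T (e r)) :=
          Finset.sum_congr rfl fun p _ => congrArg _ (Finset.sum_congr rfl fun q _ =>
            congrArg _ (Finset.sum_congr rfl fun r _ => congrArg _ (aux_tp_comm _ _ _)))
  rw [hswap]
  -- merge into the `auxG` sum and finish
  have hmerge : ((2 : ℂ) • (∑ p, (lam p : ℂ) • ∑ q, (lam q : ℂ) • ∑ r, (lam r : ℂ) • tp (e p) (e q) (T (e r)))
      + ∑ p, (lam p : ℂ) • ∑ q, (lam q : ℂ) • ∑ r, (lam r : ℂ) • tp (e p) (T (e q)) (e r))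
      = ∑ p, (lam p : ℂ) • ∑ q, (lam q : ℂ) • ∑ r, (lam r : ℂ) • auxG T e p q r :=
    aux_merge lam (fun p q r => tp (e p) (e q) (T (e r))) (fun p q r => tp (e p) (T (e q)) (e r))
  rw [hmerge]
  exact (aux_final T hlin hT e he horth lam).symm
end

section
/- Let δ be a triple derivation on a C*-algebra A, let e be a partial isometry in A, and let c ∈ A satisfy e e* c e* e = c. Then P₀(e)(δ(c)) = 0, i.e., δ(c) − e e* δ(c) − δ(c) e* e + e e* δ(c) e* e = 0. -/
variable {A : Type*} [NonUnitalNormedRing A] [StarRing A] [CStarRing A]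
  [NormedSpace ℂ A] [IsScalarTower ℂ A A] [SMulCommClass ℂ A A]
  [StarModule ℂ A] [CompleteSpace A]

/-- The Peirce-0 projection applied to `x`. -/
def P0 (e x : A) : A :=
  x - e * star e * x - x * star e * e + e * star e * x * star e * e

lemma P0_add (e x y : A) : P0 e (x + y) = P0 e x + P0 e y := by
  simp only [P0, mul_add, add_mul]
  abel

lemma P0_smul (e : A) (r : ℂ) (x : A) : P0 e (r • x) = r • P0 e x := by
  simp only [P0, mul_smul_comm, smul_mul_assoc, smul_sub, smul_add]

lemma P0_left (e y : A) (hy : e * star e * y = y) : P0 e y = 0 := by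
  unfold P0
  rw [hy]
  abel

lemma P0_right (e y : A) (hy : y * star e * e = y) : P0 e y = 0 := by
  unfold P0
  rw [hy, mul_assoc (e * star e) y (star e), mul_assoc (e * star e) (y * star e) e, hy]
  abel

/-- For a triple derivation `δ`, a partial isometry `e`, and `c` with
`e e* c e* e = c` (i.e. `c` lies in the Peirce-2 space of `e`), `P₀(e)(δ c) = 0`. -/
theorem stmt12 (δ : A → A) (hδ : IsTripleDerivation δ) (e c : A)
    (he : e * star e * e = e) (hc : e * star e * c * star e * e = c) :
    δ c - e * star e * δ c - δ c * star e * e + e * star e * δ c * star e * e = 0 := by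
  obtain ⟨hlin, hleib⟩ := hδ
  have he2 : e * (star e * e) = e := by rw [← mul_assoc, he]
  have hc2 : e * (star e * (c * (star e * e))) = c := by
    simpa only [mul_assoc] using hc
  have hpc : e * star e * c = c := by
    nth_rewrite 1 [← hc]
    simp only [← mul_assoc]
    rw [he]; exact hc
  have hcq2 : c * (star e * e) = c := by
    nth_rewrite 1 [← hc2]
    simp only [mul_assoc]
    rw [he2]
    exact hc2
  have hcq : c * star e * e = c := by rw [mul_assoc]; exact hcq2
  have htp : tp e e c = c := by
    unfold tp
    rw [hpc, hcq, ← two_smul ℂ c, smul_smul]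
    norm_num
  have hsum : δ c = tp (δ e) e c + tp e (δ e) c + tp e e (δ c) := by
    conv_lhs => rw [← htp]
    exact hleib e e c
  show P0 e (δ c) = 0
  rw [hsum, P0_add, P0_add]
  unfold tp
  rw [P0_smul, P0_smul, P0_smul, P0_add, P0_add, P0_add]
  rw [P0_right e (δ e * star e * c) (by simp only [mul_assoc]; rw [hcq2])]
  rw [P0_left e (c * star e * δ e) (by simp only [← mul_assoc]; rw [hpc])]
  rw [P0_right e (e * star (δ e) * c) (by simp only [mul_assoc]; rw [hcq2])]
  rw [P0_left e (c * star (δ e) * e) (by simp only [← mul_assoc]; rw [hpc])]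
  rw [P0_left e (e * star e * δ c) (by simp only [← mul_assoc]; rw [he])]
  rw [P0_right e (δ c * star e * e) (by simp only [mul_assoc]; rw [he2])]
  simp
end

section
/- Let T be a weak-local triple derivation on a C*-algebra A. If a, b, c ∈ A satisfy a b* = 0, b* a = 0, c b* = 0 and b* c = 0 (i.e., a ⊥ b and c ⊥ b), then {a, T(b), c} = 0, i.e., a T(b)* c + c T(b)* a = 0. -/
variable {A : Type*} [NonUnitalNormedRing A] [StarRing A] [CStarRing A]
  [NormedSpace ℂ A] [IsScalarTower ℂ A A] [SMulCommClass ℂ A A]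
  [StarModule ℂ A] [CompleteSpace A]

/-- For a genuine triple derivation, orthogonality gives `{a, δ b, c} = 0`. -/
lemma tripleDeriv_orth (δ : A → A) (hδ : IsTripleDerivation δ) (a b c : A)
    (h1 : a * star b = 0) (h2 : star b * a = 0)
    (h3 : c * star b = 0) (h4 : star b * c = 0) :
    a * star (δ b) * c + c * star (δ b) * a = 0 := by
  obtain ⟨hlin, hrule⟩ := hδ
  have h0 : tp a b c = 0 := by
    simp [tp, h1, h3]
  have hδ0 : δ 0 = 0 := hlin.mk' δ |>.map_zero
  have key := hrule a b c
  rw [h0, hδ0] at key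
  have hA : tp (δ a) b c = 0 := by
    unfold tp
    rw [mul_assoc (δ a), h4, h3, mul_zero, zero_mul, add_zero, smul_zero]
  have hC : tp a b (δ c) = 0 := by
    unfold tp
    rw [h1, mul_assoc (δ c), h2, mul_zero, zero_mul, zero_add, smul_zero]
  rw [hA, hC, zero_add, add_zero] at key
  have : (2⁻¹ : ℂ) • (a * star (δ b) * c + c * star (δ b) * a) = 0 := key.symm
  rcases smul_eq_zero.mp this with h | h
  · exact absurd h (by norm_num)
  · exact h

/-- For a weak-local triple derivation `T` on a C*-algebra, if `a ⊥ b` and `c ⊥ b`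
then `{a, T b, c} = 0`, i.e. `a (T b)* c + c (T b)* a = 0`. -/
theorem stmt14 (T : A → A) (hT : IsWeakLocalTripleDerivation T) (a b c : A)
    (h1 : a * star b = 0) (h2 : star b * a = 0)
    (h3 : c * star b = 0) (h4 : star b * c = 0) :
    a * star (T b) * c + c * star (T b) * a = 0 := by
  -- the continuous linear map  z ↦ star c * z * star a + star a * z * star c
  set F : A →L[ℂ] A :=
    ContinuousLinearMap.mulLeftRight ℂ A (star c) (star a) +
      ContinuousLinearMap.mulLeftRight ℂ A (star a) (star c) with hF
  have hFapp : ∀ z : A, F z = star c * z * star a + star a * z * star c := by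
    intro z
    simp [hF, ContinuousLinearMap.mulLeftRight_apply]
  have hFzero : F (T b) = 0 := by
    apply NormedSpace.eq_zero_of_forall_dual_eq_zero ℂ
    intro φ
    obtain ⟨δ, hδ, hφ⟩ := hT.2 (φ.comp F) b
    have horth := tripleDeriv_orth δ hδ a b c h1 h2 h3 h4
    have hFδ : F (δ b) = 0 := by
      have := congrArg star horth
      simpa [hFapp, star_add, star_mul, mul_assoc] using this
    calc φ (F (T b)) = (φ.comp F) (T b) := rfl
      _ = (φ.comp F) (δ b) := hφ
      _ = φ (F (δ b)) := rfl
      _ = 0 := by rw [hFδ, map_zero]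
  have := congrArg star hFzero
  rw [hFapp] at this
  simpa [star_add, star_mul, mul_assoc] using this
end
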